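/- Behavioural equivalence is preserved and reflected by subfunctor inclusion: if α : G ⇒ F is a natural transformation with injective components, c : C → GC is a G-coalgebra, and c' = α_C ∘ c is the induced F-coalgebra, then two states x, y ∈ C are behaviourally equivalent in (C,c) as a G-coalgebra if and only if they are behaviourally equivalent in (C,c') as an F-coalgebra, provided F preserves injections and behavioural equivalence is taken as kernel of the map to the final/minimal quotient (equivalently: for finite C, a surjection h : C → D is the quotient by a G-coalgebra congruence iff it is by the corresponding F-coalgebra congruence). -/

import Mathlib

open CategoryTheory

/-- Behavioural equivalence of two states of an `F`-coalgebra: there is a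
coalgebra morphism merging them. -/
def BehEq (F : Type u ⥤ Type u) {C : Type u} (c : C → F.obj C) (x y : C) : Prop :=
  ∃ (D : Type u) (d : D → F.obj D) (h : C → D),
    (∀ z : C, F.map (TypeCat.ofHom h) (c z) = d (h z)) ∧ h x = h y

/-- Behavioural equivalence is preserved and reflected by subfunctor inclusion:
if `α : G ⟶ F` has injective components and `F` preserves injections, then for a
`G`-coalgebra `c` and the induced `F`-coalgebra `α_C ∘ c`, two states are
behaviourally equivalent as `G`-coalgebra states iff they are as
`F`-coalgebra states. -/
theorem behEq_subfunctor (F G : Type u ⥤ Type u) (α : G ⟶ F)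
    (hα : ∀ X : Type u, Function.Injective (α.app X))
    (hF : ∀ (A B : Type u) (f : A → B),
      Function.Injective f → Function.Injective (F.map (TypeCat.ofHom f)))
    (C : Type u) (c : C → G.obj C) (x y : C) :
    BehEq G c x y ↔ BehEq F (fun z => α.app C (c z)) x y := by
  constructor
  · rintro ⟨D, d, h, hmor, hxy⟩
    refine ⟨D, fun w => α.app D (d w), h, fun z => ?_, hxy⟩
    have := types_congr_hom (α.naturality (TypeCat.ofHom h)) (c z)
    simp only [types_comp_apply] at this
    rw [← this, hmor z]
  · rintro ⟨D, d, h, hmor, hxy⟩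
    -- quotient of C by the kernel of h
    let r : C → C → Prop := fun z z' => h z = h z'
    let Q := Quot r
    let e : C → Q := Quot.mk r
    let m : Q → D := Quot.lift h (fun _ _ hh => hh)
    have hm_inj : Function.Injective m := by
      intro a b
      induction a using Quot.ind with | _ za =>
      induction b using Quot.ind with | _ zb =>
      intro hab
      exact Quot.sound hab
    -- G.map m is injective
    have hGm_inj : Function.Injective (G.map (TypeCat.ofHom m)) := by
      intro u v huv
      apply hα Q
      apply hF Q D m hm_inj
      have nu := types_congr_hom (α.naturality (TypeCat.ofHom m)) u
      have nv := types_congr_hom (α.naturality (TypeCat.ofHom m)) v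
      simp only [types_comp_apply] at nu nv
      rw [← nu, ← nv, huv]
    -- key: h z = h z' → G.map e (c z) = G.map e (c z')
    have key : ∀ z z' : C, h z = h z' → G.map (TypeCat.ofHom e) (c z) = G.map (TypeCat.ofHom e) (c z') := by
      intro z z' hzz'
      apply hGm_inj
      have hme : m ∘ e = h := rfl
      have comp : ∀ w : C, G.map (TypeCat.ofHom m) (G.map (TypeCat.ofHom e) (c w)) = G.map (TypeCat.ofHom h) (c w) := by
        intro w
        rw [← types_comp_apply (G.map (TypeCat.ofHom e)) (G.map (TypeCat.ofHom m)), ← G.map_comp]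
        rfl
      rw [comp z, comp z']
      apply hα D
      have nz := types_congr_hom (α.naturality (TypeCat.ofHom h)) (c z)
      have nz' := types_congr_hom (α.naturality (TypeCat.ofHom h)) (c z')
      simp only [types_comp_apply] at nz nz'
      rw [nz, nz', hmor z, hmor z', hzz']
    refine ⟨Q, Quot.lift (fun z => G.map (TypeCat.ofHom e) (c z)) (fun z z' hh => key z z' hh), e,
      fun z => rfl, Quot.sound hxy⟩
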